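/- There exist no nonzero real numbers v₁, v₂, v₃, c₁, c₂, c₃ such that v_j·c_i ≥ 0 for all pairs (i, j) ∈ {1,2,3}² with (i, j) ≠ (2, 2), and v₂·c₂ < 0. In other words, the 3×3 voting pattern with a single downvote at position (2,2) and upvotes everywhere else cannot be realized by the unidimensional directional voting model. -/
import Mathlib

/-- The 3×3 voting pattern with a single downvote at the middle position `(2,2)` and
upvotes everywhere else cannot be realized by the unidimensional directional voting model:
there are no nonzero real opinions `v j`, `c i` (indexed by `Fin 3`, where the index
`1 : Fin 3` is the middle one, i.e. position 2 of `{1,2,3}`) with `v j * c i ≥ 0` for all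
`(i, j) ≠ (2, 2)` and `v 2 * c 2 < 0`. -/
theorem no_unidimensional_directional_realization :
    ¬ ∃ v c : Fin 3 → ℝ, (∀ j, v j ≠ 0) ∧ (∀ i, c i ≠ 0) ∧
      (∀ i j : Fin 3, ¬(i = 1 ∧ j = 1) → v j * c i ≥ 0) ∧ v 1 * c 1 < 0 := by
  rintro ⟨v, c, hv, hc, h, hlt⟩
  have h1 := h 1 0 (by simp)
  have h0 := h 0 0 (by simp)
  have h2 := h 0 1 (by simp)
  have hv0 := hv 0
  have hc0 := hc 0
  have hpos : 0 < v 0 * c 0 := lt_of_le_of_ne h0 (Ne.symm (mul_ne_zero hv0 hc0))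
  nlinarith [mul_nonneg h2 h1]
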